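/- Let p > 1 and σ_p = (2^p − 1)^{1/p}, and let Λ_p^{(0)} ⊆ ℝ² be the lattice spanned over ℤ by (1, 0) and (1/2, σ_p/2). Then the set of points of Λ_p^{(0)} lying on the Minkowski curve |x|^p + |y|^p = 1 is exactly the six points ±(1, 0), (1/2, σ_p/2), (−1/2, −σ_p/2), (−1/2, σ_p/2), (1/2, −σ_p/2). -/

import Mathlib

open scoped Pointwise

/-- The open Minkowski ball `D_p = {(x,y) : |x|^p + |y|^p < 1}` in `ℝ²`. -/
def ballD (p : ℝ) : Set (ℝ × ℝ) :=
  {v : ℝ × ℝ | |v.1| ^ p + |v.2| ^ p < 1}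

/-- The Minkowski curve `C_p = {(x,y) : |x|^p + |y|^p = 1}`, the boundary of `D_p`. -/
def curveC (p : ℝ) : Set (ℝ × ℝ) :=
  {v : ℝ × ℝ | |v.1| ^ p + |v.2| ^ p = 1}

/-- The lattice (ℤ-span) generated by two vectors `a b : ℝ²`. -/
def latticeSet (a b : ℝ × ℝ) : Set (ℝ × ℝ) :=
  {v : ℝ × ℝ | ∃ m n : ℤ, v = (m : ℝ) • a + (n : ℝ) • b}

/-- The determinant of the 2×2 matrix with rows `a` and `b`. -/
def det2 (a b : ℝ × ℝ) : ℝ := a.1 * b.2 - a.2 * b.1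

/-- A lattice with basis `a, b` is admissible for `D` if it meets `D` at most in `0`. -/
def IsAdmissible (D : Set (ℝ × ℝ)) (a b : ℝ × ℝ) : Prop :=
  latticeSet a b ∩ D ⊆ {0}

/-- The critical determinant `Δ(D)`: the infimum of covolumes `|det(a,b)|` over all
full-rank lattices `ℤa + ℤb` admissible for `D` (with value `∞` if none exists). -/
noncomputable def criticalDet (D : Set (ℝ × ℝ)) : ENNReal :=
  sInf {d : ENNReal | ∃ a b : ℝ × ℝ, LinearIndependent ℝ ![a, b] ∧
    IsAdmissible D a b ∧ d = ENNReal.ofReal |det2 a b|}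

private lemma rpow_inj' {x y p : ℝ} (hx : 0 ≤ x) (hy : 0 ≤ y) (hp : p ≠ 0)
    (h : x ^ p = y ^ p) : x = y := by
  have := congrArg (· ^ p⁻¹) h
  simpa [Real.rpow_rpow_inv hx hp, Real.rpow_rpow_inv hy hp] using this

theorem stmt_7 (p : ℝ) (hp : 1 < p) (σ : ℝ) (hσ : σ = ((2 : ℝ) ^ p - 1) ^ (1 / p)) :
    latticeSet (1, 0) (1 / 2, σ / 2) ∩ curveC p =
      {((1 : ℝ), (0 : ℝ)), (-1, 0), (1 / 2, σ / 2), (-1 / 2, -σ / 2),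
        (-1 / 2, σ / 2), (1 / 2, -σ / 2)} := by
  have hp0 : (0 : ℝ) < p := lt_trans one_pos hp
  have hpne : p ≠ 0 := ne_of_gt hp0
  have h2p : (2 : ℝ) < 2 ^ p := by
    calc (2:ℝ) = 2 ^ (1:ℝ) := (Real.rpow_one 2).symm
    _ < 2 ^ p := (Real.rpow_lt_rpow_left_iff one_lt_two).2 hp
  have h2p0 : (0 : ℝ) < 2 ^ p := by linarith
  have hσnn : 0 ≤ σ := by
    rw [hσ]; exact Real.rpow_nonneg (by linarith) _
  have hσp : σ ^ p = 2 ^ p - 1 := by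
    rw [hσ, one_div, Real.rpow_inv_rpow (by linarith) hpne]
  have hσ1 : 1 < σ := by
    by_contra h
    push_neg at h
    have : σ ^ p ≤ 1 ^ p := Real.rpow_le_rpow hσnn h (le_of_lt hp0)
    rw [hσp, Real.one_rpow] at this
    linarith
  have hhalf : ((1 : ℝ) / 2) ^ p = 1 / 2 ^ p := by
    rw [Real.div_rpow zero_le_one (by norm_num), Real.one_rpow]
  have hσ2 : (σ / 2) ^ p = (2 ^ p - 1) / 2 ^ p := by
    rw [Real.div_rpow hσnn (by norm_num), hσp]
  have hmain : ((1:ℝ)/2) ^ p + (σ/2) ^ p = 1 := by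
    rw [hhalf, hσ2]; field_simp; ring
  ext v
  constructor
  · rintro ⟨⟨m, n, rfl⟩, hcurve⟩
    have hv : ((m : ℝ)) • ((1:ℝ), (0:ℝ)) + (n : ℝ) • ((1:ℝ)/2, σ/2) =
        ((m : ℝ) + n / 2, (n : ℝ) * σ / 2) := by
      simp only [Prod.smul_mk, smul_eq_mul, Prod.mk_add_mk, Prod.mk.injEq]
      constructor <;> ring
    rw [hv] at hcurve ⊢
    simp only [curveC, Set.mem_setOf_eq] at hcurve
    simp only [Set.mem_insert_iff, Set.mem_singleton_iff, Prod.mk.injEq]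
    have hn : n = -1 ∨ n = 0 ∨ n = 1 := by
      by_contra h
      push_neg at h
      have h2 : 2 ≤ |n| := by
        rcases le_or_gt 0 n with h' | h'
        · rw [abs_of_nonneg h']; omega
        · rw [abs_of_neg h']; omega
      have h2' : (2 : ℝ) ≤ |(n : ℝ)| := by
        rw [← Int.cast_abs]; exact_mod_cast h2
      have habs : |(n : ℝ) * σ / 2| = |(n : ℝ)| * σ / 2 := by
        rw [abs_div, abs_mul, abs_of_nonneg hσnn]; norm_num
      have hgt : 1 < |(n : ℝ) * σ / 2| := by
        rw [habs]; nlinarith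
      have : 1 < |(n : ℝ) * σ / 2| ^ p := by
        rw [Real.one_lt_rpow_iff_of_pos (by linarith)]
        exact Or.inl ⟨hgt, hp0⟩
      have hfirst : 0 ≤ |(m : ℝ) + n / 2| ^ p := Real.rpow_nonneg (abs_nonneg _) _
      linarith
    rcases hn with rfl | rfl | rfl
    · -- n = -1
      push_cast at hcurve ⊢
      have habs : |(-1 : ℝ) * σ / 2| = σ / 2 := by
        rw [abs_div, abs_mul, abs_of_nonneg hσnn]; norm_num
      rw [habs, hσ2] at hcurve
      have hm : |(m : ℝ) + -1 / 2| ^ p = ((1 : ℝ) / 2) ^ p := by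
        rw [hhalf]; field_simp at hcurve ⊢; linarith
      have heq := rpow_inj' (abs_nonneg _) (by norm_num) hpne hm
      rcases (abs_eq (by norm_num : (0:ℝ) ≤ 1/2)).1 heq with h | h
      · have hm1 : (m : ℝ) = 1 := by linarith
        exact Or.inr (Or.inr (Or.inr (Or.inr (Or.inr ⟨by rw [hm1]; ring, by ring⟩))))
      · have hm1 : (m : ℝ) = 0 := by linarith
        exact Or.inr (Or.inr (Or.inr (Or.inl ⟨by rw [hm1]; ring, by ring⟩)))
    · -- n = 0
      push_cast at hcurve ⊢
      have h0 : |(0 : ℝ) * σ / 2| ^ p = 0 := by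
        rw [show (0 : ℝ) * σ / 2 = 0 by ring, abs_zero, Real.zero_rpow hpne]
      rw [h0] at hcurve
      have hm : |(m : ℝ) + 0 / 2| ^ p = (1 : ℝ) ^ p := by
        rw [Real.one_rpow]; linarith
      have heq := rpow_inj' (abs_nonneg _) zero_le_one hpne hm
      rcases (abs_eq zero_le_one).1 heq with h | h
      · have hm1 : (m : ℝ) = 1 := by linarith
        exact Or.inl ⟨by rw [hm1]; ring, by ring⟩
      · have hm1 : (m : ℝ) = -1 := by linarith
        exact Or.inr (Or.inl ⟨by rw [hm1]; ring, by ring⟩)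
    · -- n = 1
      push_cast at hcurve ⊢
      have habs : |(1 : ℝ) * σ / 2| = σ / 2 := by
        rw [abs_div, abs_mul, abs_of_nonneg hσnn]; norm_num
      rw [habs, hσ2] at hcurve
      have hm : |(m : ℝ) + 1 / 2| ^ p = ((1 : ℝ) / 2) ^ p := by
        rw [hhalf]; field_simp at hcurve ⊢; linarith
      have heq := rpow_inj' (abs_nonneg _) (by norm_num) hpne hm
      rcases (abs_eq (by norm_num : (0:ℝ) ≤ 1/2)).1 heq with h | h
      · have hm1 : (m : ℝ) = 0 := by linarith
        exact Or.inr (Or.inr (Or.inl ⟨by rw [hm1]; ring, by ring⟩))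
      · have hm1 : (m : ℝ) = -1 := by linarith
        exact Or.inr (Or.inr (Or.inr (Or.inr (Or.inl ⟨by rw [hm1]; ring, by ring⟩))))
  · intro h
    simp only [Set.mem_insert_iff, Set.mem_singleton_iff] at h
    have e1 : |(1:ℝ)/2| = 1/2 := by norm_num
    have e1' : |(-1:ℝ)/2| = 1/2 := by norm_num
    have e2 : |σ/2| = σ/2 := abs_of_nonneg (by positivity)
    have e2' : |(-σ)/2| = σ/2 := by rw [abs_div, abs_neg, abs_of_nonneg hσnn]; norm_num
    rcases h with rfl | rfl | rfl | rfl | rfl | rfl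
    · refine ⟨⟨1, 0, by simp only [Prod.smul_mk, smul_eq_mul, Prod.mk_add_mk, Prod.mk.injEq]; push_cast; constructor <;> ring⟩, ?_⟩
      show |(1:ℝ)| ^ p + |(0:ℝ)| ^ p = 1
      rw [abs_one, abs_zero, Real.one_rpow, Real.zero_rpow hpne]; norm_num
    · refine ⟨⟨-1, 0, by simp only [Prod.smul_mk, smul_eq_mul, Prod.mk_add_mk, Prod.mk.injEq]; push_cast; constructor <;> ring⟩, ?_⟩
      show |(-1:ℝ)| ^ p + |(0:ℝ)| ^ p = 1
      rw [abs_neg, abs_one, abs_zero, Real.one_rpow, Real.zero_rpow hpne]; norm_num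
    · refine ⟨⟨0, 1, by simp only [Prod.smul_mk, smul_eq_mul, Prod.mk_add_mk, Prod.mk.injEq]; push_cast; constructor <;> ring⟩, ?_⟩
      show |(1:ℝ)/2| ^ p + |σ/2| ^ p = 1
      rw [e1, e2]; exact hmain
    · refine ⟨⟨0, -1, by simp only [Prod.smul_mk, smul_eq_mul, Prod.mk_add_mk, Prod.mk.injEq]; push_cast; constructor <;> ring⟩, ?_⟩
      show |(-1:ℝ)/2| ^ p + |(-σ)/2| ^ p = 1
      rw [e1', e2']; exact hmain
    · refine ⟨⟨-1, 1, by simp only [Prod.smul_mk, smul_eq_mul, Prod.mk_add_mk, Prod.mk.injEq]; push_cast; constructor <;> ring⟩, ?_⟩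
      show |(-1:ℝ)/2| ^ p + |σ/2| ^ p = 1
      rw [e1', e2]; exact hmain
    · refine ⟨⟨1, -1, by simp only [Prod.smul_mk, smul_eq_mul, Prod.mk_add_mk, Prod.mk.injEq]; push_cast; constructor <;> ring⟩, ?_⟩
      show |(1:ℝ)/2| ^ p + |(-σ)/2| ^ p = 1
      rw [e1, e2']; exact hmain
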